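/- Let E be a real inner product space and a, b ∈ E with a ≠ 0 and ‖a − b‖ ≤ ‖b‖. Then the (undirected) angle between a and b satisfies ∠(a,b) ≤ arcsin(‖a − b‖/‖b‖). -/

import Mathlib

open Real RealInnerProductSpace

/-- If a ≠ 0 and ‖a − b‖ ≤ ‖b‖ in a real inner product space, then the angle
between a and b is at most arcsin(‖a − b‖/‖b‖). -/
theorem stmt_7 {E : Type*} [NormedAddCommGroup E] [InnerProductSpace ℝ E]
    (a b : E) (ha : a ≠ 0) (hab : ‖a - b‖ ≤ ‖b‖) :
    InnerProductGeometry.angle a b ≤ Real.arcsin (‖a - b‖ / ‖b‖) := by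
  set t : ℝ := inner ℝ a b with ht
  have hA : (0:ℝ) < ‖a‖ := norm_pos_iff.mpr ha
  have hr : (0:ℝ) ≤ ‖a - b‖ := norm_nonneg _
  have hexp : ‖a - b‖ ^ 2 = ‖a‖ ^ 2 - 2 * t + ‖b‖ ^ 2 := by
    rw [ht, @norm_sub_sq_real]
  have hsq : ‖a - b‖ ^ 2 ≤ ‖b‖ ^ 2 := by
    have := sq_le_sq' (by linarith : -‖b‖ ≤ ‖a - b‖) hab
    simpa using this
  have htpos : ‖a‖ ^ 2 ≤ 2 * t := by nlinarith
  have hB : (0:ℝ) < ‖b‖ := by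
    rcases eq_or_ne b 0 with h | h
    · exfalso
      have : t = 0 := by simp [ht, h]
      nlinarith
    · exact norm_pos_iff.mpr h
  set s : ℝ := ‖a - b‖ / ‖b‖ with hs
  have hs0 : 0 ≤ s := div_nonneg hr hB.le
  rw [Real.arcsin_eq_arccos hs0, InnerProductGeometry.angle]
  unfold Real.arccos
  have hmono := Real.monotone_arcsin (?_ : √(1 - s ^ 2) ≤ t / (‖a‖ * ‖b‖))
  · linarith

  -- need √(1 - s^2) ≤ t / (‖a‖ * ‖b‖)
  set c : ℝ := t / (‖a‖ * ‖b‖) with hc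
  have hc0 : 0 ≤ c := by
    apply div_nonneg (by nlinarith) (by positivity)
  have key : 1 - s ^ 2 ≤ c ^ 2 := by
    rw [hs, hc]
    have ha2 : ‖a‖ ≠ 0 := hA.ne'
    have hb2 : ‖b‖ ≠ 0 := hB.ne'
    rw [div_pow, div_pow, mul_pow]
    rw [sub_le_iff_le_add, div_add_div _ _ (by positivity) (by positivity),
      le_div_iff₀ (by positivity : (0:ℝ) < ‖a‖ ^ 2 * ‖b‖ ^ 2 * ‖b‖ ^ 2), one_mul]
    nlinarith [sq_nonneg (t - ‖a‖^2), sq_nonneg (‖a‖*‖b‖), hB.le, hA.le]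
  calc √(1 - s ^ 2) ≤ √(c ^ 2) := Real.sqrt_le_sqrt key
    _ = c := Real.sqrt_sq hc0
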